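/- An infinite word s over a finite alphabet A is standard episturmian if and only if for every letter a ∈ A and every total order on A in which a is the minimal letter, a·s ≤ min(s) in the lexicographic order on infinite words. -/

import Mathlib

/-- The prefix of length `k` of an infinite word `w : ℕ → A`. -/
def pref {A : Type*} (w : ℕ → A) (k : ℕ) : List A := (List.range k).map w

/-- `u` is a (finite) factor of the infinite word `w`. -/
def IsFactor {A : Type*} (w : ℕ → A) (u : List A) : Prop :=
  ∃ i : ℕ, u = (List.range u.length).map (fun j => w (i + j))

/-- Prepend a letter to an infinite word. -/
def consW {A : Type*} (a : A) (s : ℕ → A) : ℕ → A := fun n => match n with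
  | 0 => a
  | n + 1 => s n

/-- Concatenation of a finite word with an infinite word. -/
def catW {A : Type*} (u : List A) (w : ℕ → A) : ℕ → A := fun n =>
  if h : n < u.length then u.get ⟨n, h⟩ else w (n - u.length)

/-- `u` is the lexicographically smallest factor of `w` of length `k`,
w.r.t. the strict order `lt` on letters. -/
def IsMinFactor {A : Type*} (lt : A → A → Prop) (w : ℕ → A) (k : ℕ) (u : List A) : Prop :=
  IsFactor w u ∧ u.length = k ∧
    ∀ v, IsFactor w v → v.length = k → u = v ∨ List.Lex lt u v

/-- `u` is the lexicographically greatest factor of `w` of length `k`. -/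
def IsMaxFactor {A : Type*} (lt : A → A → Prop) (w : ℕ → A) (k : ℕ) (u : List A) : Prop :=
  IsFactor w u ∧ u.length = k ∧
    ∀ v, IsFactor w v → v.length = k → u = v ∨ List.Lex lt v u

/-- `m = min(w)`: every length-`k` prefix of `m` is the lexicographically
smallest factor of `w` of length `k`. -/
def IsMinWord {A : Type*} (lt : A → A → Prop) (w m : ℕ → A) : Prop :=
  ∀ k : ℕ, IsMinFactor lt w k (pref m k)

/-- `m = max(w)`. -/
def IsMaxWord {A : Type*} (lt : A → A → Prop) (w m : ℕ → A) : Prop :=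
  ∀ k : ℕ, IsMaxFactor lt w k (pref m k)

/-- The letter `z` is separating for `t`: every length-2 factor of `t` contains `z`. -/
def Separating {A : Type*} (z : A) (t : ℕ → A) : Prop :=
  ∀ u, IsFactor t u → u.length = 2 → z ∈ u

/-- The episturmian morphism `Ψ_z` on finite words: `z ↦ z`, `x ↦ zx` for `x ≠ z`. -/
def psiL {A : Type*} [DecidableEq A] (z : A) (u : List A) : List A :=
  u.flatMap (fun x => if x = z then [z] else [z, x])

/-- `t = Ψ_z(y)` for infinite words: the `Ψ_z`-image of every prefix of `y`
is a prefix of `t`. -/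
def PsiImage {A : Type*} [DecidableEq A] (z : A) (y t : ℕ → A) : Prop :=
  ∀ n : ℕ, psiL z (pref y n) = pref t (psiL z (pref y n)).length

/-- `u` is a left special factor of `w`. -/
def LeftSpecial {A : Type*} (w : ℕ → A) (u : List A) : Prop :=
  ∃ a b : A, a ≠ b ∧ IsFactor w (a :: u) ∧ IsFactor w (b :: u)

/-- `u` is a right special factor of `w`. -/
def RightSpecial {A : Type*} (w : ℕ → A) (u : List A) : Prop :=
  ∃ a b : A, a ≠ b ∧ IsFactor w (u ++ [a]) ∧ IsFactor w (u ++ [b])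

/-- `w` is a standard episturmian word: factors closed under reversal and
every left special factor is a prefix. -/
def StdEpisturmian {A : Type*} (w : ℕ → A) : Prop :=
  (∀ u, IsFactor w u → IsFactor w u.reverse) ∧
  (∀ u, LeftSpecial w u → u = pref w u.length)

/-- `w` is an `A`-strict standard episturmian word (standard Arnoux-Rauzy sequence):
standard episturmian and every prefix has every letter as a left extension. -/
def StrictStdEpisturmian {A : Type*} (w : ℕ → A) : Prop :=
  StdEpisturmian w ∧ ∀ (n : ℕ) (a : A), IsFactor w (a :: pref w n)

/-- `w` is episturmian: factors closed under reversal and at most one right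
special factor of each length. -/
def Episturmian {A : Type*} (w : ℕ → A) : Prop :=
  (∀ u, IsFactor w u → IsFactor w u.reverse) ∧
  (∀ u v, RightSpecial w u → RightSpecial w v → u.length = v.length → u = v)

/-- `w` is an `A`-strict episturmian word: it has the same set of factors as some
`A`-strict standard episturmian word. -/
def StrictEpisturmian {A : Type*} (w : ℕ → A) : Prop :=
  ∃ s : ℕ → A, StrictStdEpisturmian s ∧ ∀ u, IsFactor w u ↔ IsFactor s u

/-- `t` is fine: there is an infinite word `s` such that for every total order on the
alphabet and every letter `a` minimal for that order, `min(t) = a·s`. -/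
def Fine {A : Type*} (t : ℕ → A) : Prop :=
  ∃ s : ℕ → A, ∀ (l : LinearOrder A) (a : A), (∀ b, l.le a b) →
    IsMinWord l.lt t (consW a s)

namespace StmtAux
variable {A : Type*}

/-- segment of an infinite word -/
def Seg (w : ℕ → A) (i n : ℕ) : List A := (List.range n).map (fun j => w (i + j))

@[simp] lemma seg_length (w : ℕ → A) (i n : ℕ) : (Seg w i n).length = n := by
  simp [Seg]

@[simp] lemma seg_getElem (w : ℕ → A) (i n t : ℕ) (ht : t < (Seg w i n).length) :
    (Seg w i n)[t] = w (i + t) := by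
  simp [Seg]

@[simp] lemma seg_zero (w : ℕ → A) (i : ℕ) : Seg w i 0 = [] := rfl

lemma eq_seg {w : ℕ → A} {u : List A} {i n : ℕ} (hl : u.length = n)
    (h : ∀ t, (ht : t < n) → u[t]'(by omega) = w (i + t)) : u = Seg w i n := by
  apply List.ext_getElem (by simp [hl])
  intro t h1 h2
  rw [h t (by simpa using h2)]
  simp

lemma seg_succ (w : ℕ → A) (i n : ℕ) :
    Seg w i (n + 1) = Seg w i n ++ [w (i + n)] := by
  simp [Seg, List.range_succ]

lemma seg_cons (w : ℕ → A) (i n : ℕ) :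
    Seg w i (n + 1) = w i :: Seg w (i + 1) n := by
  symm
  apply eq_seg (by simp)
  intro t ht
  rcases t with _ | t
  · simp
  · simp [List.getElem_cons_succ]
    congr 1; omega

lemma seg_append (w : ℕ → A) (i m n : ℕ) :
    Seg w i (m + n) = Seg w i m ++ Seg w (i + m) n := by
  symm
  apply eq_seg (by simp)
  intro t ht
  by_cases h : t < m
  · rw [List.getElem_append_left (by simpa using h)]
    simp
  · rw [List.getElem_append_right (by simp; omega)]
    simp
    congr 1; omega

lemma seg_take (w : ℕ → A) (i n m : ℕ) (h : m ≤ n) :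
    (Seg w i n).take m = Seg w i m := by
  have : n = m + (n - m) := by omega
  rw [this, seg_append]
  simp

lemma pref_eq_seg (w : ℕ → A) (n : ℕ) : pref w n = Seg w 0 n := by
  simp [pref, Seg]

@[simp] lemma pref_length (w : ℕ → A) (n : ℕ) : (pref w n).length = n := by simp [pref]

@[simp] lemma pref_getElem (w : ℕ → A) (n t : ℕ) (ht : t < (pref w n).length) :
    (pref w n)[t] = w t := by simp [pref]

lemma pref_succ (w : ℕ → A) (n : ℕ) : pref w (n + 1) = pref w n ++ [w n] := by
  simp [pref, List.range_succ]

lemma pref_take (w : ℕ → A) (n m : ℕ) (h : m ≤ n) : (pref w n).take m = pref w m := by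
  rw [pref_eq_seg, pref_eq_seg, seg_take _ _ _ _ h]

@[simp] lemma consW_zero (a : A) (s : ℕ → A) : consW a s 0 = a := rfl
@[simp] lemma consW_succ (a : A) (s : ℕ → A) (n : ℕ) : consW a s (n+1) = s n := rfl

lemma pref_consW (a : A) (s : ℕ → A) (n : ℕ) :
    pref (consW a s) (n + 1) = a :: pref s n := by
  apply List.ext_getElem (by simp)
  intro t h1 h2
  rcases t with _ | t
  · simp
  · simp

lemma isFactor_seg (w : ℕ → A) (i n : ℕ) : IsFactor w (Seg w i n) := by
  exact ⟨i, by simp [Seg]⟩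

lemma isFactor_iff {w : ℕ → A} {u : List A} :
    IsFactor w u ↔ ∃ i, u = Seg w i u.length := Iff.rfl

lemma isFactor_infix {w : ℕ → A} {u v : List A} (hv : IsFactor w v) (h : u <:+: v) :
    IsFactor w u := by
  obtain ⟨i, hi⟩ := hv
  obtain ⟨pre, post, hsplit⟩ := h
  have hvseg : v = Seg w i v.length := hi
  refine ⟨i + pre.length, ?_⟩
  show u = Seg w (i + pre.length) u.length
  apply eq_seg rfl
  intro t ht
  have hsplit' : v = pre ++ (u ++ post) := by rw [← hsplit]; simp
  have hlen : pre.length + t < v.length := by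
    rw [hsplit']; simp; omega
  have h2 : v[pre.length + t]'(hlen) = u[t]'(ht) := by
    rw [List.getElem_of_eq hsplit' hlen]
    rw [List.getElem_append_right (by omega)]
    have : pre.length + t - pre.length = t := by omega
    simp only [this]
    rw [List.getElem_append_left (by omega)]
  have h3 : v[pre.length + t]'(hlen) = w (i + (pre.length + t)) := by
    rw [List.getElem_of_eq hvseg hlen]
    rw [seg_getElem]
  rw [← h2, h3]
  congr 1; omega

lemma seg_infix_seg (w : ℕ → A) {i n i' n' : ℕ} (h1 : i' ≤ i) (h2 : i + n ≤ i' + n') :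
    Seg w i n <:+: Seg w i' n' := by
  refine ⟨Seg w i' (i - i'), Seg w (i + n) (i' + n' - (i + n)), ?_⟩
  have e1 : n' = (i - i') + (n + (i' + n' - (i + n))) := by omega
  rw [e1, seg_append, seg_append]
  have e2 : i' + (i - i') = i := by omega
  rw [e2]
  have e3 : i' + (i - i' + (n + (i' + n' - (i + n)))) - (i + n) = i' + n' - (i + n) := by omega
  rw [e3, List.append_assoc]


section Lex
variable {r : A → A → Prop}

lemma lex_of_firstdiff : ∀ (u v : List A) (j : ℕ), (hju : j < u.length) → (hjv : j < v.length) →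
    (∀ t, (ht : t < j) → u[t]'(by omega) = v[t]'(by omega)) →
    r (u[j]'hju) (v[j]'hjv) → List.Lex r u v := by
  intro u v j
  induction j generalizing u v with
  | zero =>
      intro hju hjv _ hr
      match u, v with
      | a :: u', b :: v' =>
        exact List.Lex.rel hr
  | succ j ih =>
      intro hju hjv hagree hr
      match u, v with
      | a :: u', b :: v' =>
        have h0 : a = b := hagree 0 (by omega)
        subst h0
        apply List.Lex.cons
        apply ih u' v' (by simpa using hju) (by simpa using hjv)
        · intro t ht
          have := hagree (t+1) (by omega)
          simpa using this
        · simpa using hr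

lemma firstdiff_of_lex {u v : List A} (h : List.Lex r u v) (hlen : v.length ≤ u.length) :
    ∃ j, ∃ (hju : j < u.length) (hjv : j < v.length),
      (∀ t, (ht : t < j) → u[t]'(by omega) = v[t]'(by omega)) ∧ r (u[j]'hju) (v[j]'hjv) := by
  induction h with
  | nil => simp at hlen
  | @rel a l₁ b l₂ hab =>
      exact ⟨0, by simp, by simp, by intro t ht; omega, hab⟩
  | @cons a l₁ l₂ h ih =>
      obtain ⟨j, hju, hjv, hag, hr⟩ := ih (by simpa using hlen)
      refine ⟨j+1, by simpa using hju, by simpa using hjv, ?_, by simpa using hr⟩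
      intro t ht
      rcases t with _ | t
      · simp
      · simpa using hag t (by omega)

lemma lex_trichotomy [IsTrichotomous A r] :
    ∀ (u v : List A), u.length = v.length → u = v ∨ List.Lex r u v ∨ List.Lex r v u := by
  intro u
  induction u with
  | nil =>
      intro v hv
      left; symm
      exact List.length_eq_zero_iff.mp (by simpa using hv.symm)
  | cons a u' ih =>
      intro v hv
      match v with
      | b :: v' =>
        rcases trichotomous_of r a b with h | h | h
        · right; left; exact List.Lex.rel h
        · subst h
          rcases ih v' (by simpa using hv) with h | h | h
          · left; rw [h]
          · right; left; exact List.Lex.cons h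
          · right; right; exact List.Lex.cons h
        · right; right; exact List.Lex.rel h

lemma lex_asymm [IsAsymm A r] : ∀ {u v : List A}, List.Lex r u v → List.Lex r v u → False := by
  intro u v h
  induction h with
  | nil => intro h2; cases h2
  | @rel a l₁ b l₂ hab =>
      intro h2
      cases h2 with
      | rel hba => exact asymm hab hba
      | cons h' => exact asymm hab hab
  | @cons a l₁ l₂ h ih =>
      intro h2
      cases h2 with
      | rel hba => exact asymm hba hba
      | cons h' => exact ih h'

lemma lex_irrefl [IsAsymm A r] {u : List A} (h : List.Lex r u u) : False := lex_asymm h h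

end Lex

section Order

lemma linearOrder_min_second [Fintype A] {a c : A} (hac : a ≠ c) :
    ∃ l : LinearOrder A, (∀ b, l.le a b) ∧ (∀ b, b ≠ a → l.le c b) := by
  classical
  let e : A → ℕ := fun x => (Fintype.equivFin A x : ℕ)
  have he : Function.Injective e := by
    intro x y h
    exact (Fintype.equivFin A).injective (Fin.ext h)
  let f : A → ℕ := fun x => if x = a then 0 else if x = c then 1 else e x + 2
  have hf : Function.Injective f := by
    intro x y h
    simp only [f] at h
    split_ifs at h <;> first | omega | exact he (by omega) | simp_all
  refine ⟨LinearOrder.lift' f hf, ?_, ?_⟩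
  · intro b
    show f a ≤ f b
    have ha0 : f a = 0 := by simp [f]
    rw [ha0]
    exact Nat.zero_le _
  · intro b hb
    show f c ≤ f b
    have hc1 : f c = 1 := by simp [f, Ne.symm hac]
    rw [hc1]
    by_cases hbc : b = c
    · subst hbc
      simp [f, hb]
    · have : f b = e b + 2 := by simp [f, hb, hbc]
      omega

lemma linearOrder_min [Fintype A] (a : A) :
    ∃ l : LinearOrder A, ∀ b, l.le a b := by
  classical
  let e : A → ℕ := fun x => (Fintype.equivFin A x : ℕ)
  have he : Function.Injective e := by
    intro x y h
    exact (Fintype.equivFin A).injective (Fin.ext h)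
  let f : A → ℕ := fun x => if x = a then 0 else e x + 1
  have hf : Function.Injective f := by
    intro x y h
    simp only [f] at h
    split_ifs at h <;> first | omega | exact he (by omega) | simp_all
  refine ⟨LinearOrder.lift' f hf, ?_⟩
  intro b
  show f a ≤ f b
  have ha0 : f a = 0 := by simp [f]
  rw [ha0]
  exact Nat.zero_le _

end Order

end StmtAux
namespace StmtAux
variable {A : Type*}

section Psi
variable [DecidableEq A] (z : A)

@[simp] lemma psiL_nil : psiL z ([] : List A) = [] := rfl

lemma psiL_cons (c : A) (u : List A) :
    psiL z (c :: u) = (if c = z then [z] else [z, c]) ++ psiL z u := by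
  simp [psiL]

lemma psiL_append (u v : List A) : psiL z (u ++ v) = psiL z u ++ psiL z v := by
  simp [psiL]

lemma psiL_singleton (c : A) : psiL z [c] = if c = z then [z] else [z, c] := by
  simp [psiL]

lemma psiL_length_ge (u : List A) : u.length ≤ (psiL z u).length := by
  induction u with
  | nil => simp
  | cons c u ih =>
      rw [psiL_cons]
      simp only [List.length_append, List.length_cons]
      split <;> simp <;> omega

lemma psiL_head (u : List A) (hu : u ≠ []) : ∃ t, psiL z u = z :: t := by
  match u with
  | c :: u' =>
    rw [psiL_cons]
    split <;> exact ⟨_, rfl⟩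

lemma psiL_rev (u : List A) : psiL z u.reverse ++ [z] = z :: (psiL z u).reverse := by
  induction u with
  | nil => simp
  | cons c u ih =>
      have hsing : psiL z [c] = if c = z then [z] else [z, c] := psiL_singleton z c
      rw [List.reverse_cons, psiL_append, hsing, psiL_cons, List.append_assoc]
      by_cases hc : c = z
      · rw [if_pos hc, ← List.append_assoc, ih]
        simp
      · rw [if_neg hc]
        have e : ([z, c] ++ [z] : List A) = [z] ++ [c, z] := rfl
        rw [e, ← List.append_assoc, ih]
        simp

end Psi

section Machine
variable [DecidableEq A] (s : ℕ → A) (z : A)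

/-- block start positions of the `Ψ_z`-decomposition of `s` -/
def Lf : ℕ → ℕ
  | 0 => 0
  | m + 1 => Lf m + (if s (Lf m + 1) = z then 1 else 2)

/-- the derived word `y` with `s = Ψ_z(y)` -/
def yf (m : ℕ) : A := s (Lf s z m + 1)

@[simp] lemma Lf_zero : Lf s z 0 = 0 := rfl

lemma Lf_succ (m : ℕ) :
    Lf s z (m + 1) = Lf s z m + (if s (Lf s z m + 1) = z then 1 else 2) := rfl

lemma Lf_step1 {m : ℕ} (h : s (Lf s z m + 1) = z) : Lf s z (m+1) = Lf s z m + 1 := by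
  rw [Lf_succ, if_pos h]

lemma Lf_step2 {m : ℕ} (h : s (Lf s z m + 1) ≠ z) : Lf s z (m+1) = Lf s z m + 2 := by
  rw [Lf_succ, if_neg h]

lemma Lf_step_lb (m : ℕ) : Lf s z m + 1 ≤ Lf s z (m+1) := by
  rw [Lf_succ]; split <;> omega

lemma Lf_step_ub (m : ℕ) : Lf s z (m+1) ≤ Lf s z m + 2 := by
  rw [Lf_succ]; split <;> omega

lemma Lf_add_le (m d : ℕ) : Lf s z m + d ≤ Lf s z (m + d) := by
  induction d with
  | zero => simp
  | succ d ih =>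
      have h1 := Lf_step_lb s z (m + d)
      have e : m + (d + 1) = (m + d) + 1 := rfl
      rw [e]
      omega

lemma Lf_le_of_le {m m' : ℕ} (h : m ≤ m') : Lf s z m + (m' - m) ≤ Lf s z m' := by
  have := Lf_add_le s z m (m' - m)
  have e : m + (m' - m) = m' := by omega
  rw [e] at this
  omega

lemma Lf_ge (m : ℕ) : m ≤ Lf s z m := by
  have := Lf_le_of_le s z (Nat.zero_le m)
  simpa using this

lemma Lf_mono {m m' : ℕ} (h : m < m') : Lf s z m < Lf s z m' := by
  have := Lf_le_of_le s z (le_of_lt h)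
  omega

lemma Lf_le_mono {m m' : ℕ} (h : m ≤ m') : Lf s z m ≤ Lf s z m' := by
  have := Lf_le_of_le s z h
  omega

variable (hz : s 0 = z) (sep : Separating z s)

include hz sep in
lemma s_Lf (m : ℕ) : s (Lf s z m) = z := by
  induction m with
  | zero => simpa using hz
  | succ m ih =>
      by_cases h : s (Lf s z m + 1) = z
      · rw [Lf_step1 s z h]; exact h
      · rw [Lf_step2 s z h]
        -- two consecutive letters s(Lf m+1), s(Lf m+2); separating forces the second to be z
        have hfac : IsFactor s (Seg s (Lf s z m + 1) 2) := isFactor_seg s _ 2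
        have h2 : Seg s (Lf s z m + 1) 2 = [s (Lf s z m + 1), s (Lf s z m + 2)] := by
          apply List.ext_getElem (by simp)
          intro t h1 h2
          rcases t with _ | t
          · simp
          · rcases t with _ | t
            · simp
            · simp at h2 <;> omega
        have hmem := sep _ hfac (by simp)
        rw [h2] at hmem
        simp at hmem
        rcases hmem with hmem | hmem
        · exact absurd hmem.symm h
        · exact hmem.symm

lemma exists_Lf_eq {p : ℕ} (hp : s p = z) : ∃ m, Lf s z m = p := by
  classical
  have h0 : Lf s z (Nat.findGreatest (fun m => Lf s z m ≤ p) p) ≤ p :=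
    Nat.findGreatest_spec (P := fun m => Lf s z m ≤ p) (m := 0) (Nat.zero_le p) (by simp)
  set k := Nat.findGreatest (fun m => Lf s z m ≤ p) p with hk
  have h1 : p < Lf s z (k + 1) := by
    by_cases hkp : k + 1 ≤ p
    · by_contra hcon
      have hgr : ¬ (fun m => Lf s z m ≤ p) (k + 1) :=
        Nat.findGreatest_is_greatest (P := fun m => Lf s z m ≤ p) (by omega) hkp
      simp only [] at hgr
      omega
    · have hkp2 : p ≤ k := by omega
      have := Lf_ge s z (k+1)
      omega
  rcases Nat.lt_or_ge (Lf s z k) p with hlt | hge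
  · -- Lf k < p < Lf (k+1) ≤ Lf k + 2 forces p = Lf k + 1 and step 2
    have hub := Lf_step_ub s z k
    have hp1 : p = Lf s z k + 1 := by omega
    by_cases hstep : s (Lf s z k + 1) = z
    · have := Lf_step1 s z hstep; omega
    · exact absurd (hp1 ▸ hp) hstep
  · exact ⟨k, by omega⟩

include hz sep in
lemma psiL_yf_singleton (m : ℕ) :
    psiL z [yf s z m] = Seg s (Lf s z m) (Lf s z (m+1) - Lf s z m) := by
  by_cases h : s (Lf s z m + 1) = z
  · rw [psiL_singleton, if_pos (by simpa [yf] using h), Lf_step1 s z h]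
    have e : Lf s z m + 1 - Lf s z m = 1 := by omega
    rw [e]
    apply List.ext_getElem (by simp)
    intro t h1 h2
    rcases t with _ | t
    · simp [s_Lf s z hz sep]
    · simp only [List.length_cons, List.length_nil] at h1; omega
  · rw [psiL_singleton, if_neg (by simpa [yf] using h), Lf_step2 s z h]
    have e : Lf s z m + 2 - Lf s z m = 2 := by omega
    rw [e]
    apply List.ext_getElem (by simp)
    intro t h1 h2
    rcases t with _ | (_ | t)
    · simp [s_Lf s z hz sep]
    · simp [yf]
    · simp only [List.length_cons, List.length_nil] at h1; omega
  
include hz sep in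
lemma psiL_yf_seg (j len : ℕ) :
    psiL z (Seg (yf s z) j len) = Seg s (Lf s z j) (Lf s z (j + len) - Lf s z j) := by
  induction len with
  | zero => simp
  | succ len ih =>
      rw [seg_succ, psiL_append, ih, psiL_yf_singleton s z hz sep]
      have h1 : Lf s z j ≤ Lf s z (j + len) := Lf_le_mono s z (by omega)
      have h2 : Lf s z (j + len) ≤ Lf s z (j + len + 1) := Lf_le_mono s z (by omega)
      have e : Lf s z (j + (len+1)) - Lf s z j =
          (Lf s z (j + len) - Lf s z j) + (Lf s z (j + len + 1) - Lf s z (j + len)) := by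
        have e2 : j + (len + 1) = (j + len) + 1 := by omega
        rw [e2]
        omega
      rw [e, seg_append]
      congr 2
      omega

include hz sep in
lemma psiL_yf_pref (m : ℕ) : psiL z (pref (yf s z) m) = pref s (Lf s z m) := by
  have := psiL_yf_seg s z hz sep 0 m
  simpa [pref_eq_seg] using this

include hz sep in
lemma psiL_yf_seg_length (j len : ℕ) :
    (psiL z (Seg (yf s z) j len)).length = Lf s z (j + len) - Lf s z j := by
  rw [psiL_yf_seg s z hz sep]
  simp

lemma Lf_window (p : ℕ) : ∃ m, Lf s z m ≤ p ∧ p < Lf s z (m + 1) := by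
  classical
  have h0 : Lf s z (Nat.findGreatest (fun m => Lf s z m ≤ p) p) ≤ p :=
    Nat.findGreatest_spec (P := fun m => Lf s z m ≤ p) (m := 0) (Nat.zero_le p) (by simp)
  set k := Nat.findGreatest (fun m => Lf s z m ≤ p) p with hk
  refine ⟨k, h0, ?_⟩
  by_cases hkp : k + 1 ≤ p
  · by_contra hcon
    have hgr : ¬ (fun m => Lf s z m ≤ p) (k + 1) :=
      Nat.findGreatest_is_greatest (P := fun m => Lf s z m ≤ p) (by omega) hkp
    simp only [] at hgr
    omega
  · have hkp2 : p ≤ k := by omega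
    have := Lf_ge s z (k+1)
    omega

include hz sep in
lemma parse : ∀ (u : List A) (j : ℕ),
    Seg s (Lf s z j) (psiL z u).length = psiL z u →
    s (Lf s z j + (psiL z u).length) = z →
    Seg (yf s z) j u.length = u := by
  intro u
  induction u with
  | nil => intro j _ _; simp
  | cons c u ih =>
      intro j hseg hnext
      by_cases hc : c = z
      · have hE : psiL z (c :: u) = z :: psiL z u := by
          rw [psiL_cons, if_pos hc]; rfl
        rw [hE] at hseg hnext
        have hlen : (z :: psiL z u).length = (psiL z u).length + 1 := by simp
        rw [hlen] at hseg hnext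
        rw [seg_cons, List.cons.injEq] at hseg
        obtain ⟨hs0, hs1⟩ := hseg
        have hz1 : s (Lf s z j + 1) = z := by
          rcases List.eq_nil_or_concat u with hu | hu
          · subst hu
            have e : Lf s z j + (([] : List A).length + 1) = Lf s z j + 1 := by simp
            rw [show (psiL z ([] : List A)).length = 0 from rfl] at hnext
            simpa using hnext
          · have hune : u ≠ [] := by
              rintro rfl
              obtain ⟨l, b, hlb⟩ := hu
              exact absurd hlb.symm (by simp)
            obtain ⟨t0, ht0⟩ := psiL_head z u hune
            rw [ht0] at hs1
            rw [show (z :: t0).length = t0.length + 1 from by simp] at hs1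
            rw [seg_cons, List.cons.injEq] at hs1
            exact hs1.1
        have hyj : yf s z j = c := hz1.trans hc.symm
        have hstep : Lf s z (j+1) = Lf s z j + 1 := Lf_step1 s z hz1
        have hrec1 : Seg s (Lf s z (j+1)) (psiL z u).length = psiL z u := by
          rw [hstep]; exact hs1
        have hrec2 : s (Lf s z (j+1) + (psiL z u).length) = z := by
          rw [hstep]
          have e : Lf s z j + 1 + (psiL z u).length = Lf s z j + ((psiL z u).length + 1) := by
            omega
          rw [e]; exact hnext
        have hihr := ih (j+1) hrec1 hrec2
        show Seg (yf s z) j (u.length + 1) = c :: u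
        rw [seg_cons, hyj, hihr]
      · have hE : psiL z (c :: u) = z :: c :: psiL z u := by
          rw [psiL_cons, if_neg hc]; rfl
        rw [hE] at hseg hnext
        have hlen : (z :: c :: psiL z u).length = ((psiL z u).length + 1) + 1 := by simp
        rw [hlen] at hseg hnext
        rw [seg_cons, List.cons.injEq] at hseg
        obtain ⟨hs0, hs1⟩ := hseg
        rw [seg_cons, List.cons.injEq] at hs1
        obtain ⟨hs2, hs3⟩ := hs1
        have hyj : yf s z j = c := hs2
        have hstep : Lf s z (j+1) = Lf s z j + 2 := by
          apply Lf_step2 s z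
          intro hcon
          rw [hs2] at hcon
          exact hc hcon
        have hrec1 : Seg s (Lf s z (j+1)) (psiL z u).length = psiL z u := by
          rw [hstep]
          have e : Lf s z j + 2 = Lf s z j + 1 + 1 := rfl
          rw [e]; exact hs3
        have hrec2 : s (Lf s z (j+1) + (psiL z u).length) = z := by
          rw [hstep]
          have e : Lf s z j + 2 + (psiL z u).length
              = Lf s z j + ((psiL z u).length + 1 + 1) := by omega
          rw [e]; exact hnext
        have hihr := ih (j+1) hrec1 hrec2
        show Seg (yf s z) j (u.length + 1) = c :: u
        rw [seg_cons, hyj, hihr]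

include hz sep in
lemma psiL_factor_up {u : List A} (h : IsFactor (yf s z) u) :
    IsFactor s (psiL z u ++ [z]) := by
  obtain ⟨j, hj⟩ := h
  have hu : u = Seg (yf s z) j u.length := hj
  have h1 : psiL z u = Seg s (Lf s z j) (Lf s z (j + u.length) - Lf s z j) := by
    conv_lhs => rw [hu]
    exact psiL_yf_seg s z hz sep j u.length
  have hle : Lf s z j ≤ Lf s z (j + u.length) := Lf_le_mono s z (by omega)
  have h2 : psiL z u ++ [z] =
      Seg s (Lf s z j) ((Lf s z (j + u.length) - Lf s z j) + 1) := by
    rw [seg_succ, ← h1]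
    have e : Lf s z j + (Lf s z (j + u.length) - Lf s z j) = Lf s z (j + u.length) := by
      omega
    rw [e, s_Lf s z hz sep]
  rw [h2]
  exact isFactor_seg s _ _

include hz sep in
lemma psiL_factor_down {u : List A} (h : IsFactor s (psiL z u ++ [z])) :
    IsFactor (yf s z) u := by
  rcases List.eq_nil_or_concat u with hu | hu
  · subst hu; exact ⟨0, by simp⟩
  · have hune : u ≠ [] := by
      rintro rfl
      obtain ⟨l, b, hlb⟩ := hu
      exact absurd hlb.symm (by simp)
    obtain ⟨t0, ht0⟩ := psiL_head z u hune
    obtain ⟨i, hi⟩ := h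
    have hiseg : psiL z u ++ [z] = Seg s i ((psiL z u ++ [z]).length) := hi
    have hl2 : (psiL z u ++ [z]).length = (psiL z u).length + 1 := by simp
    rw [hl2] at hiseg
    rw [seg_succ] at hiseg
    obtain ⟨hA, hB⟩ := List.append_inj hiseg (by simp)
    have hnextz : s (i + (psiL z u).length) = z := by
      have := hB
      simp at this
      exact this.symm
    have hsiz : s i = z := by
      rw [ht0] at hA
      rw [show (z :: t0).length = t0.length + 1 from by simp, seg_cons,
        List.cons.injEq] at hA
      exact hA.1.symm
    obtain ⟨j, hj⟩ := exists_Lf_eq s z hsiz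
    have hseg' : Seg s (Lf s z j) (psiL z u).length = psiL z u := by
      rw [hj]; exact hA.symm
    have hnext' : s (Lf s z j + (psiL z u).length) = z := by
      rw [hj]; exact hnextz
    have := parse s z hz sep u j hseg' hnext'
    exact ⟨j, this.symm⟩

include hz sep in
lemma covering {v : List A} (hv : IsFactor s v) (h2 : 2 ≤ v.length) :
    ∃ u, IsFactor (yf s z) u ∧ u.length + 1 ≤ v.length ∧ v <:+: psiL z u ++ [z] := by
  obtain ⟨i, hi⟩ := hv
  set n := v.length with hn
  have hvseg : v = Seg s i n := hi
  obtain ⟨j₀, hj₀le, hj₀lt⟩ := Lf_window s z i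
  have hj₀ub := Lf_step_ub s z j₀
  by_cases hz2 : s (i + n - 1) = z
  · -- last letter of the window is a block start
    obtain ⟨m, hm⟩ := exists_Lf_eq s z hz2
    have hj₀m : j₀ ≤ m := by
      by_contra hcon
      have := Lf_mono s z (show m < j₀ from by omega)
      omega
    refine ⟨Seg (yf s z) j₀ (m - j₀), isFactor_seg _ _ _, ?_, ?_⟩
    · simp only [seg_length]
      rcases Nat.lt_or_ge (Lf s z j₀) i with hlt | hge
      · -- Lf j₀ = i - 1, step at j₀ is 2
        have hstep2 : Lf s z j₀ + 2 ≤ Lf s z (j₀ + 1) := by omega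
        have hj₀m' : j₀ < m := by
          by_contra hcon
          have : m = j₀ := by omega
          rw [this] at hm
          omega
        have hchain := Lf_le_of_le s z (show j₀ + 1 ≤ m from by omega)
        omega
      · have hchain := Lf_le_of_le s z hj₀m
        omega
    · have hps : psiL z (Seg (yf s z) j₀ (m - j₀)) ++ [z]
          = Seg s (Lf s z j₀) ((Lf s z m - Lf s z j₀) + 1) := by
        rw [psiL_yf_seg s z hz sep]
        rw [show j₀ + (m - j₀) = m from by omega]
        rw [seg_succ]
        have hle : Lf s z j₀ ≤ Lf s z m := Lf_le_mono s z hj₀m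
        rw [show Lf s z j₀ + (Lf s z m - Lf s z j₀) = Lf s z m from by omega]
        rw [s_Lf s z hz sep]
      rw [hps, hvseg]
      apply seg_infix_seg s hj₀le
      have hle : Lf s z j₀ ≤ Lf s z m := Lf_le_mono s z hj₀m
      omega
  · -- last letter is the second letter of a block
    have hn1 : 1 ≤ i + n - 1 := by omega
    have hzprev : s (i + n - 2) = z := by
      have hfac : IsFactor s (Seg s (i + n - 2) 2) := isFactor_seg s _ 2
      have hexp : Seg s (i + n - 2) 2 = [s (i + n - 2), s (i + n - 1)] := by
        apply List.ext_getElem (by simp)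
        intro t ha hb
        rcases t with _ | (_ | t)
        · simp
        · have e : i + n - 2 + 1 = i + n - 1 := by omega
          simp [e]
        · simp at ha <;> omega
      have hmem := sep _ hfac (by simp)
      rw [hexp] at hmem
      simp at hmem
      rcases hmem with hmem | hmem
      · exact hmem.symm
      · exact absurd hmem.symm hz2
    obtain ⟨m, hm⟩ := exists_Lf_eq s z hzprev
    have hstepm : Lf s z (m + 1) = Lf s z m + 2 := by
      apply Lf_step2 s z
      rw [hm, show i + n - 2 + 1 = i + n - 1 from by omega]
      exact hz2
    have hj₀m : j₀ ≤ m := by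
      by_contra hcon
      have := Lf_mono s z (show m < j₀ from by omega)
      omega
    refine ⟨Seg (yf s z) j₀ (m + 1 - j₀), isFactor_seg _ _ _, ?_, ?_⟩
    · simp only [seg_length]
      rcases Nat.lt_or_ge (Lf s z j₀) i with hlt | hge
      · have hstep2 : Lf s z j₀ + 2 ≤ Lf s z (j₀ + 1) := by omega
        have hj₀m' : j₀ < m := by
          by_contra hcon
          have : m = j₀ := by omega
          rw [this] at hm
          omega
        have hchain := Lf_le_of_le s z (show j₀ + 1 ≤ m from by omega)
        omega
      · have hchain := Lf_le_of_le s z hj₀m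
        omega
    · have hps : psiL z (Seg (yf s z) j₀ (m + 1 - j₀))
          = Seg s (Lf s z j₀) (Lf s z (m + 1) - Lf s z j₀) := by
        rw [psiL_yf_seg s z hz sep]
        rw [show j₀ + (m + 1 - j₀) = m + 1 from by omega]
      apply List.IsInfix.trans (l₂ := psiL z (Seg (yf s z) j₀ (m + 1 - j₀)))
      · rw [hps, hvseg]
        apply seg_infix_seg s hj₀le
        have hle : Lf s z j₀ ≤ Lf s z m := Lf_le_mono s z hj₀m
        omega
      · exact (List.prefix_append _ _).isInfix

end Machine
end StmtAux
namespace StmtAux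
variable {A : Type*}

/-- the canonical "bad factor" pattern witnessing failure of `a·s ≤ min(s)` -/
def BadPat (lt : A → A → Prop) (s : ℕ → A) (a : A) (M : ℕ) (c : A) : Prop :=
  IsFactor s (pref (consW a s) (M + 1) ++ [c]) ∧ lt c (s M)

lemma lex_append_last {lt : A → A → Prop} (Q : List A) {c d : A} (h : lt c d) :
    List.Lex lt (Q ++ [c]) (Q ++ [d]) := by
  induction Q with
  | nil => exact List.Lex.rel h
  | cons q Q ih => exact List.Lex.cons ih

lemma lex_of_badpat {lt : A → A → Prop} {s : ℕ → A} {a : A} {M : ℕ} {c : A}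
    (h : BadPat lt s a M c) :
    List.Lex lt (pref (consW a s) (M + 1) ++ [c]) (pref (consW a s) (M + 2)) := by
  have e : pref (consW a s) (M + 2) = pref (consW a s) (M + 1) ++ [consW a s (M + 1)] :=
    pref_succ _ _
  rw [e]
  exact lex_append_last _ (by simpa using h.2)

lemma badpat_of_lex {s : ℕ → A} (l : LinearOrder A) {a : A} (hmin : ∀ b, l.le a b)
    {v : List A} (hv : IsFactor s v)
    (hlex : List.Lex l.lt v (pref (consW a s) v.length)) :
    ∃ M c, BadPat l.lt s a M c ∧ M + 2 ≤ v.length := by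
  letI := l
  obtain ⟨j, hju, hjv, hagree, hlt⟩ := firstdiff_of_lex hlex (by simp)
  rcases Nat.eq_zero_or_pos j with hj0 | hjpos
  · subst hj0
    have hP0 : (pref (consW a s) v.length)[0]'hjv = a := by
      have : (0:ℕ) < v.length := by simpa using hjv
      simp
    rw [hP0] at hlt
    exact absurd (lt_of_lt_of_le hlt (hmin _)) (lt_irrefl _)
  · obtain ⟨i, hi⟩ := hv
    have hvseg : v = Seg s i v.length := hi
    refine ⟨j - 1, v[j]'hju, ⟨⟨i, ?_⟩, ?_⟩, by omega⟩
    · -- the truncated bad factor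
      have hlenT : (pref (consW a s) (j - 1 + 1) ++ [v[j]'hju]).length = j + 1 := by
        simp; omega
      rw [hlenT]
      show _ = Seg s i (j + 1)
      apply eq_seg hlenT
      intro t ht
      by_cases htj : t < j
      · rw [List.getElem_append_left (by simp; omega)]
        have h1 : (pref (consW a s) (j - 1 + 1))[t]'(by simp; omega) = consW a s t := by
          simp
        rw [h1]
        have h2 : (pref (consW a s) v.length)[t]'(by simp; omega) = consW a s t := by
          simp
        have h3 := hagree t htj
        rw [h2] at h3
        have h4 : v[t]'(by omega) = s (i + t) := by
          conv_lhs => rw [List.getElem_of_eq hvseg (by omega)]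
          simp
        rw [← h3, h4]
      · have htj' : t = j := by omega
        subst htj'
        rw [List.getElem_append_right (by simp; omega)]
        have h4 : v[t]'(by omega) = s (i + t) := by
          conv_lhs => rw [List.getElem_of_eq hvseg (by omega)]
          simp
        simp [h4.symm]
    · -- the strict inequality at the difference position
      have hPj : (pref (consW a s) v.length)[j]'hjv = s (j - 1) := by
        have : j - 1 + 1 = j := by omega
        rw [pref_getElem, ← this]
        rfl
      rw [hPj] at hlt
      exact hlt

lemma no_badpat_iff {s : ℕ → A} (l : LinearOrder A) {a : A} (hmin : ∀ b, l.le a b) :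
    (∀ M c, ¬ BadPat l.lt s a M c) ↔
      (∀ v, IsFactor s v →
        pref (consW a s) v.length = v ∨ List.Lex l.lt (pref (consW a s) v.length) v) := by
  letI := l
  haveI hasymm : IsAsymm A l.lt := ⟨fun x y h h' => lt_asymm h h'⟩
  haveI htri : IsTrichotomous A l.lt := ⟨fun x y h1 h2 => (lt_trichotomy x y).resolve_left h1 |>.resolve_right h2⟩
  constructor
  · intro hno v hv
    rcases lex_trichotomy (r := l.lt) (pref (consW a s) v.length) v (by simp) with h | h | h
    · exact Or.inl h
    · exact Or.inr h
    · exfalso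
      obtain ⟨M, c, hbad, _⟩ := badpat_of_lex l hmin hv h
      exact hno M c hbad
  · intro hrhs M c hbad
    have hlex := lex_of_badpat hbad
    have hfac := hbad.1
    have hlen : (pref (consW a s) (M + 1) ++ [c]).length = M + 2 := by simp
    rcases hrhs _ hfac with h | h
    · rw [hlen] at h
      rw [h] at hlex
      exact lex_irrefl hlex
    · rw [hlen] at h
      exact lex_asymm hlex h

end StmtAux
namespace StmtAux
variable {A : Type*}

section Machine2
variable [DecidableEq A] (s : ℕ → A) (z : A) (hz : s 0 = z) (sep : Separating z s)

include hz sep in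
lemma sep_adj {p : ℕ} (h1 : s p ≠ z) (h2 : s (p + 1) ≠ z) : False := by
  have hfac : IsFactor s (Seg s p 2) := isFactor_seg s _ 2
  have hexp : Seg s p 2 = [s p, s (p + 1)] := by
    apply List.ext_getElem (by simp)
    intro t ha hb
    rcases t with _ | (_ | t)
    · simp
    · simp
    · simp at ha <;> omega
  have hmem := sep _ hfac (by simp)
  rw [hexp] at hmem
  simp at hmem
  rcases hmem with hmem | hmem
  · exact h1 hmem.symm
  · exact h2 hmem.symm

include hz sep in
lemma boundary_after {p : ℕ} (hnz : s p ≠ z) :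
    ∃ m₀, Lf s z (m₀ + 1) = p + 1 ∧ yf s z m₀ = s p := by
  have hp1 : 1 ≤ p := by
    rcases Nat.eq_zero_or_pos p with h | h
    · exact absurd (h ▸ hz) (h ▸ hnz)
    · exact h
  have hprev : s (p - 1) = z := by
    by_contra hcon
    apply sep_adj s z hz sep hcon
    rw [show p - 1 + 1 = p from by omega]
    exact hnz
  obtain ⟨m₀, hm₀⟩ := exists_Lf_eq s z hprev
  have hstep : s (Lf s z m₀ + 1) = s p := by
    rw [hm₀, show p - 1 + 1 = p from by omega]
  refine ⟨m₀, ?_, ?_⟩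
  · rw [Lf_step2 s z (by rw [hstep]; exact hnz), hm₀]
    omega
  · rw [yf, hstep]

include hz sep in
lemma boundary_after_z {p : ℕ} (h0 : s p = z) (h1 : s (p + 1) = z) :
    ∃ m₀, Lf s z (m₀ + 1) = p + 1 ∧ yf s z m₀ = z := by
  obtain ⟨m₀, hm₀⟩ := exists_Lf_eq s z h0
  have hstep : s (Lf s z m₀ + 1) = z := by rw [hm₀]; exact h1
  refine ⟨m₀, ?_, ?_⟩
  · rw [Lf_step1 s z hstep, hm₀]
  · rw [yf, hstep]

include hz sep in
lemma bad_up {lt : A → A → Prop} {a : A} {m : ℕ} {c : A}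
    (h : BadPat lt (yf s z) a m c) : BadPat lt s a (Lf s z m + 1) c := by
  obtain ⟨hfac, hlt⟩ := h
  constructor
  · -- the factor
    have hfac2 : IsFactor s (psiL z (pref (consW a (yf s z)) (m + 1) ++ [c]) ++ [z]) :=
      psiL_factor_up s z hz sep hfac
    have hG : pref (consW a (yf s z)) (m + 1) ++ [c] = [a] ++ pref (yf s z) m ++ [c] := by
      rw [pref_consW]; rfl
    rw [hG, psiL_append, psiL_append] at hfac2
    rw [psiL_yf_pref s z hz sep] at hfac2
    have hT : pref (consW a s) (Lf s z m + 1 + 1) ++ [c]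
        = [a] ++ pref s (Lf s z m) ++ [z, c] := by
      rw [pref_consW, pref_succ, s_Lf s z hz sep]
      simp
    rw [hT]
    apply isFactor_infix hfac2
    rw [psiL_singleton, psiL_singleton]
    by_cases ha : a = z
    · by_cases hcz : c = z
      · refine ⟨[], [], ?_⟩; simp [ha, hcz]
      · refine ⟨[], [z], ?_⟩; simp [ha, hcz]
    · by_cases hcz : c = z
      · refine ⟨[z], [], ?_⟩; simp [ha, hcz]
      · refine ⟨[z], [z], ?_⟩; simp [ha, hcz]
  · -- the inequality
    have : s (Lf s z m + 1) = yf s z m := rfl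
    rw [this]
    exact hlt

lemma isFactor_of_eq_seg {w : ℕ → A} {u : List A} {i n : ℕ} (h : u = Seg w i n) :
    IsFactor w u := by
  rw [h]; exact isFactor_seg w i n

include hz sep in
lemma bad_down {l : LinearOrder A} {a : A} (hmin : ∀ b, l.le a b) {M : ℕ} {c : A}
    (h : BadPat l.lt s a M c) :
    ∃ m' c', BadPat l.lt (yf s z) a m' c' ∧ m' + 2 ≤ M + 1 := by
  letI := l
  obtain ⟨hfac, hltc⟩ := h
  obtain ⟨p, hp⟩ := hfac
  have hT2 : a :: (pref s M ++ [c]) = Seg s p (M + 2) := by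
    have e1 : pref (consW a s) (M+1) ++ [c] = a :: (pref s M ++ [c]) := by
      rw [pref_consW]; rfl
    have hlen : (pref (consW a s) (M + 1) ++ [c]).length = M + 2 := by simp
    have hp' : pref (consW a s) (M+1) ++ [c] = Seg s p (M + 2) := by
      rw [hlen] at hp; exact hp
    rw [← e1]; exact hp'
  have hpa : s p = a := by
    have h0 := List.getElem_of_eq hT2 (i := 0) (by simp)
    simp at h0
    exact h0.symm
  have hmid : ∀ t, t < M → s (p + 1 + t) = s t := by
    intro t ht
    have h1 := List.getElem_of_eq hT2 (i := t + 1) (by simp; omega)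
    rw [List.getElem_cons_succ] at h1
    rw [List.getElem_append_left (by simp; omega)] at h1
    rw [pref_getElem, seg_getElem] at h1
    rw [show p + 1 + t = p + (t + 1) from by omega]
    exact h1.symm
  have hpc : s (p + 1 + M) = c := by
    have h1 := List.getElem_of_eq hT2 (i := M + 1) (by simp)
    rw [List.getElem_cons_succ] at h1
    rw [List.getElem_append_right (by simp)] at h1
    rw [seg_getElem] at h1
    simp at h1
    rw [show p + 1 + M = p + (M + 1) from by omega]
    exact h1.symm
  rcases Nat.eq_zero_or_pos M with hM0 | hMpos
  · exfalso
    subst hM0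
    by_cases ha : a = z
    · rw [hz, ← ha] at hltc
      exact absurd (lt_of_lt_of_le hltc (hmin c)) (lt_irrefl c)
    · obtain ⟨m₀, hstep, hym⟩ := boundary_after s z hz sep (p := p) (by rw [hpa]; exact ha)
      have hz1 : s (p + 1) = z := by
        rw [← hstep]; exact s_Lf s z hz sep (m₀ + 1)
      have hc : c = z := by
        rw [← hpc]
        simpa using hz1
      rw [hc, hz] at hltc
      exact lt_irrefl _ hltc
  · -- M ≥ 1
    have hbound : ∃ m₀, Lf s z (m₀ + 1) = p + 1 ∧ yf s z m₀ = a := by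
      by_cases ha : a = z
      · have h1 : s (p + 1) = z := by
          have h2 := hmid 0 (by omega)
          rw [show p + 1 + 0 = p + 1 from by omega] at h2
          rw [h2, hz]
        obtain ⟨m₀, h2, h3⟩ := boundary_after_z s z hz sep (by rw [hpa, ha]) h1
        exact ⟨m₀, h2, by rw [h3, ha]⟩
      · obtain ⟨m₀, h2, h3⟩ := boundary_after s z hz sep (by rw [hpa]; exact ha)
        exact ⟨m₀, h2, by rw [h3, hpa]⟩
    obtain ⟨m₀, hLm₀, hym₀⟩ := hbound
    obtain ⟨k, hkle, hklt⟩ := Lf_window s z M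
    have hkub := Lf_step_ub s z k
    have hmain : ∃ k', Lf s z k' = M - 1 ∧ l.lt c (yf s z k') := by
      rcases Nat.lt_or_ge (Lf s z k) M with hlt1 | hge1
      · have hLk : Lf s z k = M - 1 := by omega
        refine ⟨k, hLk, ?_⟩
        have he : yf s z k = s M := by
          show s (Lf s z k + 1) = s M
          rw [hLk, show M - 1 + 1 = M from by omega]
        rw [he]; exact hltc
      · have hLk : Lf s z k = M := by omega
        have hsM : s M = z := by rw [← hLk]; exact s_Lf s z hz sep k
        have hk1 : 1 ≤ k := by
          rcases Nat.eq_zero_or_pos k with h | h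
          · rw [h] at hLk; simp at hLk; omega
          · exact h
        by_cases hykz : yf s z (k - 1) = z
        · have hykz' : s (Lf s z (k - 1) + 1) = z := hykz
          have hstep : Lf s z (k - 1 + 1) = Lf s z (k - 1) + 1 := Lf_step1 s z hykz'
          rw [show k - 1 + 1 = k from by omega] at hstep
          refine ⟨k - 1, by omega, ?_⟩
          rw [hykz, ← hsM]
          exact hltc
        · exfalso
          have hykz' : s (Lf s z (k - 1) + 1) ≠ z := hykz
          have hstep : Lf s z (k - 1 + 1) = Lf s z (k - 1) + 2 := Lf_step2 s z hykz'
          rw [show k - 1 + 1 = k from by omega] at hstep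
          apply sep_adj s z hz sep (p := p + M)
          · rw [show p + M = p + 1 + (M - 1) from by omega, hmid (M - 1) (by omega)]
            rw [show M - 1 = Lf s z (k - 1) + 1 from by omega]
            exact hykz'
          · rw [show p + M + 1 = p + 1 + M from by omega, hpc]
            intro hcz
            exact absurd (hcz.trans hsM.symm) (ne_of_lt hltc)
    obtain ⟨k', hLk', hck'⟩ := hmain
    have hk'M : k' ≤ M - 1 := by
      have := Lf_ge s z k'
      omega
    have hpsi : psiL z (pref (yf s z) k') = pref s (M - 1) := by
      rw [psiL_yf_pref s z hz sep, hLk']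
    have hseg : Seg s (Lf s z (m₀ + 1)) (psiL z (pref (yf s z) k')).length
        = psiL z (pref (yf s z) k') := by
      rw [hpsi, hLm₀]
      symm
      apply eq_seg rfl
      intro t ht
      rw [pref_getElem]
      have htM : t < M := by
        simp at ht
        omega
      exact (hmid t htM).symm
    have hnext : s (Lf s z (m₀ + 1) + (psiL z (pref (yf s z) k')).length) = z := by
      rw [hpsi, hLm₀]
      simp only [pref_length]
      rw [show p + 1 + (M - 1) = p + 1 + (M - 1) from rfl, hmid (M - 1) (by omega)]
      rw [show M - 1 = Lf s z k' from hLk'.symm]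
      exact s_Lf s z hz sep k'
    have hparse := parse s z hz sep (pref (yf s z) k') (m₀ + 1) hseg hnext
    simp only [pref_length] at hparse
    have hbdl := psiL_yf_seg_length s z hz sep (m₀ + 1) k'
    have hlen1 : (psiL z (Seg (yf s z) (m₀ + 1) k')).length = M - 1 := by
      rw [hparse, hpsi]
      simp
    have hmono := Lf_le_mono s z (show m₀ + 1 ≤ m₀ + 1 + k' from by omega)
    have hbdry : Lf s z (m₀ + 1 + k') = p + M := by omega
    have hynext : yf s z (m₀ + 1 + k') = c := by
      show s (Lf s z (m₀ + 1 + k') + 1) = c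
      rw [hbdry, show p + M + 1 = p + 1 + M from by omega]
      exact hpc
    refine ⟨k', c, ⟨?_, ?_⟩, ?_⟩
    · apply isFactor_of_eq_seg (i := m₀) (n := k' + 2)
      rw [pref_consW]
      rw [show (k' : ℕ) + 2 = (k' + 1) + 1 from rfl, seg_cons, seg_succ, hym₀, hparse, hynext]
      simp
    · exact hck'
    · omega

end Machine2
end StmtAux
namespace StmtAux
variable {A : Type*}

/-- the right-hand condition of the theorem -/
def GoodW (s : ℕ → A) : Prop :=
  ∀ (l : LinearOrder A) (a : A), (∀ b, l.le a b) →
    ∀ v : List A, IsFactor s v →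
      pref (consW a s) v.length = v ∨ List.Lex l.lt (pref (consW a s) v.length) v

lemma seg_two (w : ℕ → A) (i : ℕ) : Seg w i 2 = [w i, w (i + 1)] := by
  apply List.ext_getElem (by simp)
  intro t ha hb
  rcases t with _ | (_ | t)
  · simp
  · simp
  · simp at ha <;> omega

lemma pref_one (w : ℕ → A) : pref w 1 = [w 0] := by
  apply List.ext_getElem (by simp)
  intro t h1 h2
  rcases t with _ | t
  · simp
  · simp at h1

lemma std_separating {s : ℕ → A} (hstd : StdEpisturmian s) : Separating (s 0) s := by
  classical
  intro u hu hlen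
  obtain ⟨i, hi⟩ := hu
  have hu2 : u = Seg s i 2 := by rw [hlen] at hi; exact hi
  rw [hu2, seg_two]
  by_contra hcon
  simp at hcon
  obtain ⟨hx, hy⟩ := hcon
  have huniq : ∀ c : A, c ≠ s 0 → ∀ q q' : ℕ, 1 ≤ q → 1 ≤ q' → s q = c → s q' = c →
      s (q - 1) = s (q' - 1) := by
    intro c hc q q' hq hq' hsq hsq'
    by_contra hne
    have hfac1 : IsFactor s (s (q - 1) :: [c]) := by
      apply isFactor_of_eq_seg (i := q - 1) (n := 2)
      rw [seg_two, show q - 1 + 1 = q from by omega, hsq]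
    have hfac2 : IsFactor s (s (q' - 1) :: [c]) := by
      apply isFactor_of_eq_seg (i := q' - 1) (n := 2)
      rw [seg_two, show q' - 1 + 1 = q' from by omega, hsq']
    have hls : LeftSpecial s [c] := ⟨_, _, hne, hfac1, hfac2⟩
    have h1 := hstd.2 [c] hls
    rw [show ([c] : List A).length = 1 from rfl, pref_one] at h1
    exact hc (by injection h1)
  have hrevfac : IsFactor s ([s i, s (i + 1)].reverse) := by
    apply hstd.1
    apply isFactor_of_eq_seg (i := i) (n := 2)
    rw [seg_two]
  have hrevfac2 : IsFactor s [s (i + 1), s i] := by simpa using hrevfac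
  obtain ⟨q, hq⟩ := hrevfac2
  have hq2 : [s (i + 1), s i] = Seg s q 2 := hq
  rw [seg_two] at hq2
  have hsq : s q = s (i + 1) := by injection hq2 with h1 h2; exact h1.symm
  have hsq1 : s (q + 1) = s i := by
    injection hq2 with h1 h2
    injection h2 with h3 h4
    exact h3.symm
  have hex : ∃ n, s n = s i ∨ s n = s (i + 1) := ⟨i, Or.inl rfl⟩
  have hNspec := Nat.find_spec hex
  set N := Nat.find hex with hN
  have hN1 : 1 ≤ N := by
    rcases Nat.eq_zero_or_pos N with h | h
    · exfalso
      rw [h] at hNspec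
      rcases hNspec with h2 | h2
      · exact hx h2
      · exact hy h2
    · exact h
  have hprev : s (N - 1) = s i ∨ s (N - 1) = s (i + 1) := by
    rcases hNspec with h | h
    · right
      have := huniq (s i) (Ne.symm hx) N (q + 1) hN1 (by omega) h hsq1
      rw [this, show q + 1 - 1 = q from by omega, hsq]
    · left
      have := huniq (s (i + 1)) (Ne.symm hy) N (i + 1) hN1 (by omega) h rfl
      rw [this, show i + 1 - 1 = i from by omega]
  exact Nat.find_min hex (m := N - 1) (by omega) hprev

lemma lex_singleton {r : A → A → Prop} {a b : A} (h : List.Lex r [a] [b]) : r a b := by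
  cases h with
  | rel h => exact h
  | cons h => cases h

lemma rhs_separating [Fintype A] {s : ℕ → A} (hrhs : GoodW s) : Separating (s 0) s := by
  intro u hu hlen
  obtain ⟨i, hi⟩ := hu
  have hu2 : u = Seg s i 2 := by rw [hlen] at hi; exact hi
  rw [hu2, seg_two]
  by_cases hx : s i = s 0
  · simp [hx]
  · have key : ∀ (l : LinearOrder A), (∀ b, l.le (s i) b) →
        s (i + 1) = s 0 ∨ l.lt (s 0) (s (i + 1)) := by
      intro l hmin
      have hfac : IsFactor s [s i, s (i + 1)] := by
        apply isFactor_of_eq_seg (i := i) (n := 2)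
        rw [seg_two]
      rcases hrhs l (s i) hmin _ hfac with h | h
      · left
        rw [show ([s i, s (i + 1)] : List A).length = 2 from rfl, pref_consW, pref_one] at h
        injection h with h1 h2
        injection h2 with h3 h4
        exact h3.symm
      · right
        rw [show ([s i, s (i + 1)] : List A).length = 2 from rfl, pref_consW, pref_one] at h
        letI := l
        cases h with
        | rel h1 => exact absurd h1 (lt_irrefl _)
        | cons h1 => exact lex_singleton h1
    by_cases hyx : s (i + 1) = s i
    · obtain ⟨l, hmin⟩ := linearOrder_min (s i)
      rcases key l hmin with h | h
      · simp [h]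
      · letI := l
        rw [hyx] at h
        exact absurd (lt_of_lt_of_le h (hmin _)) (lt_irrefl _)
    · obtain ⟨l, hmin, hsec⟩ := linearOrder_min_second (a := s i) (c := s (i + 1)) (Ne.symm hyx)
      rcases key l hmin with h | h
      · simp [h]
      · letI := l
        have hle : l.le (s (i + 1)) (s 0) := hsec _ (Ne.symm hx)
        exact absurd (lt_of_lt_of_le h hle) (lt_irrefl _)

lemma firstdiff_unique {u v : List A} {j j' : ℕ} (hju : j < u.length) (hjv : j < v.length)
    (hju' : j' < u.length) (hjv' : j' < v.length)
    (h1 : ∀ t, (ht : t < j) → u[t]'(by omega) = v[t]'(by omega))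
    (hne1 : u[j]'hju ≠ v[j]'hjv)
    (h1' : ∀ t, (ht : t < j') → u[t]'(by omega) = v[t]'(by omega))
    (hne2 : u[j']'hju' ≠ v[j']'hjv') : j = j' := by
  rcases lt_trichotomy j j' with h | h | h
  · exact absurd (h1' j h) hne1
  · exact h
  · exact absurd (h1 j' h) hne2

lemma rhs_leftSpecial [Fintype A] {s : ℕ → A} (hrhs : GoodW s) :
    ∀ u, LeftSpecial s u → u = pref s u.length := by
  intro u hls
  obtain ⟨x, x', hne, hfx, hfx'⟩ := hls
  by_contra hcon
  have key : ∀ (l : LinearOrder A) (b : A), (∀ b', l.le b b') → IsFactor s (b :: u) →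
      List.Lex l.lt (pref s u.length) u := by
    intro l b hmin hfac
    rcases hrhs l b hmin _ hfac with h | h
    · exfalso
      rw [show (b :: u).length = u.length + 1 from rfl, pref_consW] at h
      injection h with h1 h2
      exact hcon h2.symm
    · rw [show (b :: u).length = u.length + 1 from rfl, pref_consW] at h
      letI := l
      cases h with
      | rel h1 => exact absurd h1 (lt_irrefl _)
      | cons h1 => exact h1
  obtain ⟨l₁, hmin₁⟩ := linearOrder_min (A := A) x
  obtain ⟨j, hju, hjv, hag, hlt₁⟩ := firstdiff_of_lex (key l₁ x hmin₁ hfx) (by simp)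
  have hQu : ∀ (l : LinearOrder A) (b : A), (∀ b', l.le b b') → IsFactor s (b :: u) →
      l.lt ((pref s u.length)[j]'hju) (u[j]'hjv) := by
    intro l b hmin hfac
    obtain ⟨j2, hju2, hjv2, hag2, hlt2⟩ := firstdiff_of_lex (key l b hmin hfac) (by simp)
    have hj2 : j2 = j := by
      apply firstdiff_unique hju2 hjv2 hju hjv hag2 _ hag _
      · letI := l
        exact ne_of_lt hlt2
      · letI := l₁
        exact ne_of_lt hlt₁
    subst hj2
    exact hlt2
  by_cases hdx : u[j]'hjv = x
  · have h := hQu l₁ x hmin₁ hfx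
    rw [hdx] at h
    letI := l₁
    exact absurd (lt_of_lt_of_le h (hmin₁ _)) (lt_irrefl _)
  · by_cases hdx' : u[j]'hjv = x'
    · obtain ⟨l₂, hmin₂⟩ := linearOrder_min (A := A) x'
      have h := hQu l₂ x' hmin₂ hfx'
      rw [hdx'] at h
      letI := l₂
      exact absurd (lt_of_lt_of_le h (hmin₂ _)) (lt_irrefl _)
    · by_cases hex : (pref s u.length)[j]'hju = x
      · obtain ⟨l₄, hmin₄, hsec₄⟩ :=
          linearOrder_min_second (a := x') (c := u[j]'hjv) (Ne.symm hdx')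
        have h := hQu l₄ x' hmin₄ hfx'
        letI := l₄
        have hle : l₄.le (u[j]'hjv) ((pref s u.length)[j]'hju) := by
          apply hsec₄
          rw [hex]
          exact hne
        exact absurd (lt_of_lt_of_le h hle) (lt_irrefl _)
      · obtain ⟨l₃, hmin₃, hsec₃⟩ :=
          linearOrder_min_second (a := x) (c := u[j]'hjv) (Ne.symm hdx)
        have h := hQu l₃ x hmin₃ hfx
        letI := l₃
        have hle := hsec₃ _ hex
        exact absurd (lt_of_lt_of_le h hle) (lt_irrefl _)

section Machine3
variable [DecidableEq A] (s : ℕ → A) (z : A) (hz : s 0 = z) (sep : Separating z s)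

include hz sep in
lemma std_down (hstd : StdEpisturmian s) : StdEpisturmian (yf s z) := by
  constructor
  · intro v hv
    have h1 : IsFactor s (psiL z v ++ [z]) := psiL_factor_up s z hz sep hv
    have h2 := hstd.1 _ h1
    have h3 : (psiL z v ++ [z]).reverse = psiL z v.reverse ++ [z] := by
      rw [List.reverse_append, psiL_rev]
      simp
    rw [h3] at h2
    exact psiL_factor_down s z hz sep h2
  · intro u hls
    obtain ⟨x, x', hne, hf1, hf2⟩ := hls
    have hext : ∀ b, IsFactor (yf s z) (b :: u) →
        IsFactor s ((if b = z then z else b) :: (psiL z u ++ [z])) := by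
      intro b hb
      have h1 : IsFactor s (psiL z (b :: u) ++ [z]) := psiL_factor_up s z hz sep hb
      rw [psiL_cons] at h1
      by_cases hbz : b = z
      · rw [if_pos hbz] at h1 ⊢
        simpa using h1
      · rw [if_neg hbz] at h1 ⊢
        apply isFactor_infix h1
        refine ⟨[z], [], ?_⟩
        simp
    have hlsW : LeftSpecial s (psiL z u ++ [z]) := by
      refine ⟨if x = z then z else x, if x' = z then z else x', ?_, hext x hf1, hext x' hf2⟩
      by_cases hxz : x = z
      · by_cases hxz' : x' = z
        · exact absurd (hxz.trans hxz'.symm) hne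
        · simp only [if_pos hxz, if_neg hxz']
          intro h
          exact hne (hxz.trans h)
      · by_cases hxz' : x' = z
        · simp only [if_neg hxz, if_pos hxz']
          intro h
          exact hxz h
        · simp only [if_neg hxz, if_neg hxz']
          exact hne
    have hW := hstd.2 _ hlsW
    have hlenW : (psiL z u ++ [z]).length = (psiL z u).length + 1 := by simp
    rw [hlenW, pref_succ] at hW
    obtain ⟨hW1, hW2⟩ := List.append_inj hW (by simp)
    have hW2' : s (psiL z u).length = z := by
      have := hW2
      simp at this
      exact this.symm
    have hseg : Seg s (Lf s z 0) (psiL z u).length = psiL z u := by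
      rw [Lf_zero, ← pref_eq_seg]
      exact hW1.symm
    have hnext : s (Lf s z 0 + (psiL z u).length) = z := by
      rw [Lf_zero]
      simpa using hW2'
    have := parse s z hz sep u 0 hseg hnext
    rw [← pref_eq_seg] at this
    exact this.symm

end Machine3

lemma std_no_badpat : ∀ (M : ℕ) (s : ℕ → A), StdEpisturmian s →
    ∀ (l : LinearOrder A) (a : A), (∀ b, l.le a b) → ∀ c, ¬ BadPat l.lt s a M c := by
  intro M
  induction M using Nat.strong_induction_on with
  | _ M ih =>
    intro s hstd l a hmin c hbad
    letI : DecidableEq A := Classical.decEq A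
    have sep : Separating (s 0) s := std_separating hstd
    have hstdy := std_down s (s 0) rfl sep hstd
    obtain ⟨m', c', hbad', hsize⟩ := bad_down s (s 0) rfl sep hmin hbad
    exact ih m' (by omega) _ hstdy l a hmin c' hbad'

lemma rhs_reverse [Fintype A] : ∀ (n : ℕ) (s : ℕ → A), GoodW s →
    ∀ v, IsFactor s v → v.length ≤ n → IsFactor s v.reverse := by
  intro n
  induction n using Nat.strong_induction_on with
  | _ n ih =>
    intro s hrhs v hv hlen
    by_cases h1 : v.length ≤ 1
    · rcases v with _ | ⟨c, _ | ⟨d, v'⟩⟩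
      · simpa using hv
      · simpa using hv
      · simp at h1
    · have h2 : 2 ≤ v.length := by omega
      letI : DecidableEq A := Classical.decEq A
      have sep : Separating (s 0) s := rhs_separating hrhs
      have hrhsy : GoodW (yf s (s 0)) := by
        intro l a hmin
        apply (no_badpat_iff l hmin).mp
        intro M c hbad
        have hbadup := bad_up s (s 0) rfl sep hbad
        exact (no_badpat_iff l hmin).mpr (hrhs l a hmin) _ _ hbadup
      obtain ⟨u, hu, hsize, hinf⟩ := covering s (s 0) rfl sep hv h2
      have hurev : IsFactor (yf s (s 0)) u.reverse :=
        ih (n - 1) (by omega) _ hrhsy u hu (by omega)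
      have hfac2 : IsFactor s (psiL (s 0) u.reverse ++ [s 0]) :=
        psiL_factor_up s (s 0) rfl sep hurev
      have hrev : psiL (s 0) u.reverse ++ [s 0] = (psiL (s 0) u ++ [s 0]).reverse := by
        rw [List.reverse_append, psiL_rev]
        simp
      rw [hrev] at hfac2
      apply isFactor_infix hfac2
      exact List.reverse_infix.mpr hinf

end StmtAux
/-- `s` is standard episturmian iff `a·s ≤ min(s)` for every letter `a` and every
order making `a` minimal (expressed factor-wise: every factor of `s` is
lexicographically ≥ the prefix of `a·s` of the same length). -/
theorem stmt_8 {A : Type*} [Fintype A] (s : ℕ → A) :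
    StdEpisturmian s ↔
      ∀ (l : LinearOrder A) (a : A), (∀ b, l.le a b) →
        ∀ v : List A, IsFactor s v →
          pref (consW a s) v.length = v ∨ List.Lex l.lt (pref (consW a s) v.length) v := by
  classical
  constructor
  · intro hstd l a hmin v hv
    exact (StmtAux.no_badpat_iff l hmin).mp
      (fun M c => StmtAux.std_no_badpat M s hstd l a hmin c) v hv
  · intro hrhs
    have hg : StmtAux.GoodW s := hrhs
    exact ⟨fun u hu => StmtAux.rhs_reverse u.length s hg u hu le_rfl,
      StmtAux.rhs_leftSpecial hg⟩
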